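/- Let F be a free group of rank at least 2 with a free basis containing two distinct elements a and b. If g ∈ F is not a power of a and not a power of b, then for every pair of integers n and m, g a^m g b^n ≠ 1. -/

import Mathlib

open List

namespace St16

variable {α : Type*}

/-- The no-cancellation relation between adjacent letters. -/
def R (p q : α × Bool) : Prop := ¬(p.1 = q.1 ∧ p.2 = !q.2)

open FreeGroup

theorem invRev_append (L₁ L₂ : List (α × Bool)) :
    invRev (L₁ ++ L₂) = invRev L₂ ++ invRev L₁ := by simp [invRev]

theorem invRev_replicate (a : α) (b : Bool) (n : ℕ) :
    invRev (List.replicate n (a, b)) = List.replicate n (a, !b) := by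
  simp [invRev, List.map_replicate]

theorem invRev_singleton (e : α × Bool) : invRev [e] = [(e.1, !e.2)] := by
  simp [invRev]

theorem chain'_replicate (y : α) (s : Bool) (n : ℕ) : Chain' R (List.replicate n (y, s)) := by
  induction n with
  | zero => exact isChain_nil
  | succ n ih =>
    cases n with
    | zero => exact isChain_singleton _
    | succ m =>
      rw [List.replicate_succ]
      refine List.IsChain.cons_cons ?_ ih
      intro ⟨_, hs⟩
      simp at hs

theorem not_chain'_flip (y : α) (s : Bool) {m k : ℕ} (hm : m ≠ 0) (hk : k ≠ 0) :
    ¬ Chain' R (List.replicate m (y, s) ++ List.replicate k (y, !s)) := by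
  intro h
  obtain ⟨m', rfl⟩ := Nat.exists_eq_succ_of_ne_zero hm
  obtain ⟨k', rfl⟩ := Nat.exists_eq_succ_of_ne_zero hk
  have hinf : [(y, s), (y, !s)] <:+:
      List.replicate (m' + 1) (y, s) ++ List.replicate (k' + 1) (y, !s) := by
    refine ⟨List.replicate m' (y, s), List.replicate k' (y, !s), ?_⟩
    rw [List.replicate_succ' (n := m') (a := (y, s)), List.replicate_succ]
    simp
  have := (h.infix hinf).rel_head
  exact this ⟨rfl, by simp⟩

theorem palindrome : ∀ (n : ℕ) (c : List (α × Bool)), c.length ≤ n → Chain' R c →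
    invRev c = c → c = [] := by
  intro n
  induction n with
  | zero => intro c hc _ _; exact List.eq_nil_of_length_eq_zero (Nat.le_zero.mp hc)
  | succ n ih =>
    intro c hlen hch hpal
    cases hc : c with
    | nil => rfl
    | cons d c' =>
      subst hc
      rcases c'.eq_nil_or_concat with rfl | ⟨c'', e, rfl⟩
      · rw [invRev_singleton] at hpal
        have : (!d.2) = d.2 := congrArg Prod.snd (List.head_eq_of_cons_eq hpal)
        simp at this
      · exfalso
        rw [List.concat_eq_append] at *
        have hpal' : invRev [e] ++ invRev c'' ++ invRev [d] = [d] ++ (c'' ++ [e]) := by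
          rw [← invRev_append, ← invRev_append]
          simpa using hpal
        rw [invRev_singleton, invRev_singleton] at hpal'
        simp only [List.append_assoc, List.singleton_append] at hpal'
        have hde : (e.1, !e.2) = d := List.head_eq_of_cons_eq hpal'
        have htail : invRev c'' ++ [(d.1, !d.2)] = c'' ++ [e] := List.tail_eq_of_cons_eq hpal'
        have hsp := List.append_inj htail (by rw [invRev_length])
        have hc'' : c'' = [] := by
          refine ih c'' ?_ ?_ hsp.1
          · have : (d :: (c'' ++ [e])).length ≤ n + 1 := hlen
            simp at this; omega
          · exact ((hch.tail).prefix (List.prefix_append _ _))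
        subst hc''
        have he : e = (d.1, !d.2) := (List.head_eq_of_cons_eq hsp.2).symm
        simp only [List.nil_append] at hch
        have := hch.rel_head
        rw [he] at this
        exact this ⟨rfl, by simp⟩

section DecEq

variable [DecidableEq α]

theorem reduce_of_chain' : ∀ {L : List (α × Bool)}, Chain' (R) L → FreeGroup.reduce L = L
  | [], _ => rfl
  | [p], _ => rfl
  | p :: q :: L, h => by
    change List.IsChain R _ at h
    rw [List.isChain_cons_cons] at h
    rw [FreeGroup.reduce.cons, reduce_of_chain' h.2]
    simp only [List.casesOn]
    rw [if_neg h.1]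

theorem chain'_of_reduce : ∀ {L : List (α × Bool)}, FreeGroup.reduce L = L → Chain' (R) L := by
  intro L
  induction L with
  | nil => intro _; exact List.isChain_nil
  | cons p L ih =>
    intro h
    rw [FreeGroup.reduce.cons] at h
    cases hr : FreeGroup.reduce L with
    | nil => rw [hr] at h; cases h; exact List.isChain_singleton _
    | cons q tl =>
      rw [hr] at h
      simp only [List.casesOn] at h
      by_cases hc : p.1 = q.1 ∧ p.2 = !q.2
      · rw [if_pos hc] at h
        exfalso
        have h1 : (FreeGroup.reduce L).length ≤ L.length := FreeGroup.Red.length_le FreeGroup.reduce.red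
        rw [hr, h] at h1
        simp at h1
      · rw [if_neg hc] at h
        cases h
        exact List.isChain_cons_cons.2 ⟨hc, ih hr⟩

theorem cancel : ∀ (L₁ : List (α × Bool)), Chain' R L₁ → ∀ L₂ : List (α × Bool), Chain' R L₂ →
    ∃ p q c, L₁ = p ++ c ∧ L₂ = invRev c ++ q ∧ FreeGroup.reduce (L₁ ++ L₂) = p ++ q := by
  intro L₁
  induction L₁ using List.reverseRecOn with
  | nil =>
    intro _ L₂ h₂
    exact ⟨[], L₂, [], rfl, by simp [invRev], by simpa using reduce_of_chain' h₂⟩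
  | append_singleton L₁' e ih =>
    intro h₁ L₂ h₂
    cases L₂ with
    | nil =>
      exact ⟨L₁' ++ [e], [], [], by simp, by simp [invRev], by simpa using reduce_of_chain' h₁⟩
    | cons f L₂' =>
      by_cases hc : e.1 = f.1 ∧ f.2 = !e.2
      · have hf : f = (e.1, !e.2) := Prod.ext hc.1.symm hc.2
        have hstep : FreeGroup.Red.Step ((L₁' ++ [e]) ++ f :: L₂') (L₁' ++ L₂') := by
          have harr : (L₁' ++ [e]) ++ f :: L₂' = L₁' ++ (e.1, e.2) :: (e.1, !e.2) :: L₂' := by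
            rw [hf]; simp
          rw [harr]
          exact FreeGroup.Red.Step.not
        obtain ⟨p, q, c, h1, h2, h3⟩ := ih (h₁.prefix (List.prefix_append _ _)) L₂' h₂.tail
        refine ⟨p, q, c ++ [e], by rw [h1]; simp, ?_, ?_⟩
        · rw [invRev_append, invRev_singleton, ← hf]
          simp [h2]
        · rw [FreeGroup.reduce.Step.eq hstep, h3]
      · refine ⟨L₁' ++ [e], f :: L₂', [], by simp, by simp [invRev], ?_⟩
        apply reduce_of_chain'
        change List.IsChain R _
        rw [List.isChain_append]
        refine ⟨h₁, h₂, ?_⟩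
        intro x hx y hy
        simp [List.getLast?_concat] at hx
        simp at hy
        subst hx; subst hy
        intro ⟨u, v⟩
        exact hc ⟨u, by rw [v]; simp⟩

theorem mk_replicate (y : α) (s : Bool) (n : ℕ) :
    FreeGroup.mk (List.replicate n (y, s)) = FreeGroup.of y ^ (cond s (n : ℤ) (-(n : ℤ))) := by
  cases s with
  | true =>
    simp only [cond_true, zpow_natCast]
    rw [← FreeGroup.toWord_of_pow, FreeGroup.mk_toWord]
  | false =>
    have h1 : List.replicate n (y, false) = invRev (List.replicate n (y, true)) := by
      rw [invRev_replicate]; rfl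
    rw [h1, ← FreeGroup.inv_mk, ← FreeGroup.toWord_of_pow, FreeGroup.mk_toWord]
    simp

theorem zpow_eq_mk (y : α) (k : ℤ) :
    ∃ s : Bool, FreeGroup.of y ^ k = FreeGroup.mk (List.replicate k.natAbs (y, s)) := by
  rcases k.eq_nat_or_neg with ⟨j, rfl | rfl⟩
  · exact ⟨true, by rw [mk_replicate]; simp⟩
  · exact ⟨false, by rw [mk_replicate]; simp⟩

end DecEq

end St16

namespace St16
open FreeGroup List
variable {α : Type*} [DecidableEq α]

theorem square_decomp (x : FreeGroup α) :
    ∃ p q c, x.toWord = p ++ c ∧ x.toWord = invRev c ++ q ∧ (x * x).toWord = p ++ q ∧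
      p.length = q.length := by
  have hch : Chain' R x.toWord := chain'_of_reduce x.reduce_toWord
  obtain ⟨p, q, c, h1, h2, h3⟩ := cancel x.toWord hch x.toWord hch
  have hxx : x * x = FreeGroup.mk (x.toWord ++ x.toWord) := by
    rw [← FreeGroup.mul_mk, FreeGroup.mk_toWord]
  refine ⟨p, q, c, h1, h2, ?_, ?_⟩
  · rw [hxx, FreeGroup.toWord_mk, h3]
  · have e1 := congrArg List.length h1
    have e2 := congrArg List.length h2
    rw [List.length_append] at e1
    rw [List.length_append, invRev_length] at e2
    omega

theorem sq_eq_pow {y : α} {s : Bool} {N : ℕ} {x : FreeGroup α}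
    (h : x * x = FreeGroup.mk (List.replicate N (y, s))) : ∃ j : ℤ, x = FreeGroup.of y ^ j := by
  obtain ⟨p, q, c, h1, h2, h3, hlen⟩ := square_decomp x
  have hch : Chain' R x.toWord := chain'_of_reduce x.reduce_toWord
  rw [h, FreeGroup.toWord_mk, reduce_of_chain' (chain'_replicate y s N)] at h3
  -- h3 : List.replicate N (y, s) = p ++ q
  set len := p.length with hlp
  have hNlen : N = len + len := by
    have := congrArg List.length h3
    simp only [List.length_replicate, List.length_append] at this
    omega
  have hp : p = List.replicate len (y, s) := by
    have h4 := congrArg (List.take len) h3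
    rw [List.take_replicate, List.take_left' hlp.symm] at h4
    rw [← h4]
    congr 1
    omega
  have hq : q = List.replicate len (y, s) := by
    have h4 := congrArg (List.drop len) h3
    rw [List.drop_replicate, List.drop_left' hlp.symm] at h4
    rw [← h4]
    congr 1
    omega
  by_cases hcl : c.length ≤ len
  · have hic : invRev c = List.take c.length x.toWord := by
      rw [h2, List.take_left' (by rw [invRev_length])]
    have hic2 : List.take c.length x.toWord = List.replicate c.length (y, s) := by
      rw [h1, List.take_append_of_le_length (by omega : c.length ≤ p.length), hp,
        List.take_replicate]
      congr 1
      omega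
    have hcrep : c = List.replicate c.length (y, !s) := by
      have h5 : invRev (invRev c) = invRev (List.replicate c.length (y, s)) := by
        rw [hic, hic2]
      rwa [invRev_invRev, invRev_replicate] at h5
    rcases Nat.eq_zero_or_pos c.length with hc0 | hcpos
    · have hcnil : c = [] := List.eq_nil_of_length_eq_zero hc0
      subst hcnil
      have hx : x = FreeGroup.mk (List.replicate len (y, s)) := by
        conv_lhs => rw [← FreeGroup.mk_toWord (x := x)]
        rw [h1, hp]
        simp
      exact ⟨cond s (len : ℤ) (-(len : ℤ)), by rw [hx, mk_replicate]⟩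
    · exfalso
      apply not_chain'_flip y s (m := len) (k := c.length) (by omega) (by omega)
      rw [← hp, ← hcrep, ← h1]
      exact hch
  · push_neg at hcl
    set k := c.length - len with hk
    have hkc : c.length = p.length + k := by omega
    have hic : invRev c = p ++ List.take k c := by
      have e1 : List.take c.length x.toWord = invRev c := by
        rw [h2]; exact List.take_left' (by rw [invRev_length])
      rw [← e1, h1, hkc]
      simp [List.take_append]
    have hq2 : q = List.drop k c := by
      have e1 : List.drop c.length x.toWord = q := by
        rw [h2]; exact List.drop_left' (by rw [invRev_length])
      rw [← e1, h1, hkc]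
      simp [List.drop_append]
    have hcd : c = invRev (List.take k c) ++ invRev p := by
      conv_lhs => rw [← invRev_invRev (L₁ := c), hic, invRev_append]
    have hdropc : List.drop k c = invRev p := by
      conv_lhs => rw [hcd]
      rw [List.drop_left' (by rw [invRev_length, List.length_take]; omega)]
    have hqrep : q = List.replicate len (y, !s) := by
      rw [hq2, hdropc, hp, invRev_replicate]
    have hlen0 : len = 0 := by
      by_contra h0
      have e := hq.symm.trans hqrep
      obtain ⟨l', hl'⟩ := Nat.exists_eq_succ_of_ne_zero h0
      rw [hl', List.replicate_succ, List.replicate_succ] at e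
      have := congrArg Prod.snd (List.head_eq_of_cons_eq e)
      simp at this
    exfalso
    have hpnil : p = [] := by rw [hp, hlen0]; rfl
    have hpal : invRev c = c := by
      rw [hic, hpnil, List.nil_append, hk, hlen0, Nat.sub_zero, List.take_length]
    have hcch : Chain' R c := by
      rw [h1] at hch
      exact hch.suffix (List.suffix_append _ _)
    have := palindrome c.length c le_rfl hcch hpal
    rw [this] at hcl
    simp at hcl

end St16

namespace St16
open FreeGroup List
variable {α : Type*} [DecidableEq α]

theorem aux {y z : α} (hyz : y ≠ z) {s t : Bool} {N M : ℕ} (hN : N ≠ 0) (hM : M ≠ 0)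
    (hMN : M ≤ N) (x : FreeGroup α) :
    x * x ≠ FreeGroup.mk (List.replicate N (y, s) ++ List.replicate M (z, t)) := by
  intro h
  obtain ⟨p, q, c, h1, h2, h3, hlen⟩ := square_decomp x
  have hch : Chain' R x.toWord := chain'_of_reduce x.reduce_toWord
  have hWch : Chain' R (List.replicate N (y, s) ++ List.replicate M (z, t)) := by
    change List.IsChain R _
    rw [List.isChain_append]
    refine ⟨chain'_replicate _ _ _, chain'_replicate _ _ _, ?_⟩
    intro u hu v hv
    obtain ⟨N', rfl⟩ := Nat.exists_eq_succ_of_ne_zero hN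
    obtain ⟨M', rfl⟩ := Nat.exists_eq_succ_of_ne_zero hM
    rw [List.replicate_succ' (n := N') (a := (y, s)), List.getLast?_concat] at hu
    rw [List.replicate_succ, List.head?_cons] at hv
    cases hu; cases hv
    intro ⟨h5, _⟩
    exact hyz h5
  rw [h, FreeGroup.toWord_mk, reduce_of_chain' hWch] at h3
  -- h3 : replicate N (y,s) ++ replicate M (z,t) = p ++ q
  set len := p.length with hlp
  have hsum : N + M = len + len := by
    have := congrArg List.length h3
    simp only [List.length_append, List.length_replicate] at this
    omega
  have hlenN : len ≤ N := by omega
  have hlen1 : len ≠ 0 := by omega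
  have hW2 : List.replicate len (y, s) ++
      (List.replicate (N - len) (y, s) ++ List.replicate M (z, t)) = p ++ q := by
    rw [← List.append_assoc, ← List.replicate_add]
    rw [show len + (N - len) = N by omega]
    exact h3
  have hpq := List.append_inj hW2 (by simp [hlp])
  have hp : p = List.replicate len (y, s) := hpq.1.symm
  have hq : q = List.replicate (N - len) (y, s) ++ List.replicate M (z, t) := hpq.2.symm
  have hztq : (z, t) ∈ q := by
    rw [hq]
    exact List.mem_append_right _ (List.mem_replicate.2 ⟨hM, rfl⟩)
  by_cases hcl : c.length ≤ len
  · have hic : invRev c = List.take c.length x.toWord := by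
      rw [h2, List.take_left' (by rw [invRev_length])]
    have hic2 : List.take c.length x.toWord = List.replicate c.length (y, s) := by
      rw [h1, List.take_append_of_le_length (by omega : c.length ≤ p.length), hp,
        List.take_replicate]
      congr 1
      omega
    have hcrep : c = List.replicate c.length (y, !s) := by
      have h5 : invRev (invRev c) = invRev (List.replicate c.length (y, s)) := by
        rw [hic, hic2]
      rwa [invRev_invRev, invRev_replicate] at h5
    rcases Nat.eq_zero_or_pos c.length with hc0 | hcpos
    · have hcnil : c = [] := List.eq_nil_of_length_eq_zero hc0
      subst hcnil
      have hpq2 : p = q := by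
        have e1 : x.toWord = p := by rw [h1]; simp
        have e2 : x.toWord = q := by
          rw [h2]; simp [invRev]
        rw [← e1, e2]
      rw [← hpq2, hp] at hztq
      have := (List.eq_of_mem_replicate hztq)
      exact hyz (congrArg Prod.fst this).symm
    · apply not_chain'_flip y s (m := len) (k := c.length) hlen1 (by omega)
      rw [← hp, ← hcrep, ← h1]
      exact hch
  · push_neg at hcl
    set k := c.length - len with hk
    have hkc : c.length = p.length + k := by omega
    have hic : invRev c = p ++ List.take k c := by
      have e1 : List.take c.length x.toWord = invRev c := by
        rw [h2]; exact List.take_left' (by rw [invRev_length])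
      rw [← e1, h1, hkc]
      simp [List.take_append]
    have hq2 : q = List.drop k c := by
      have e1 : List.drop c.length x.toWord = q := by
        rw [h2]; exact List.drop_left' (by rw [invRev_length])
      rw [← e1, h1, hkc]
      simp [List.drop_append]
    have hcd : c = invRev (List.take k c) ++ invRev p := by
      conv_lhs => rw [← invRev_invRev (L₁ := c), hic, invRev_append]
    have hdropc : List.drop k c = invRev p := by
      conv_lhs => rw [hcd]
      rw [List.drop_left' (by rw [invRev_length, List.length_take]; omega)]
    have hqrep : q = List.replicate len (y, !s) := by
      rw [hq2, hdropc, hp, invRev_replicate]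
    rw [hqrep] at hztq
    have := List.eq_of_mem_replicate hztq
    exact hyz (congrArg Prod.fst this).symm

theorem not_sq_two_blocks {y z : α} (hyz : y ≠ z) {s t : Bool} {N M : ℕ} (hN : N ≠ 0)
    (hM : M ≠ 0) (x : FreeGroup α) :
    x * x ≠ FreeGroup.mk (List.replicate N (y, s) ++ List.replicate M (z, t)) := by
  rcases le_or_gt M N with hMN | hNM
  · exact aux hyz hN hM hMN x
  · intro h
    apply aux hyz.symm hM hN (le_of_lt hNM) x⁻¹
    have : x⁻¹ * x⁻¹ = (x * x)⁻¹ := (mul_inv_rev x x).symm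
    rw [this, h, FreeGroup.inv_mk, invRev_append, invRev_replicate, invRev_replicate]

end St16

/-- Let `F` be a free group with a free basis containing two distinct
elements `a` and `b`.  If `g ∈ F` is not a power of `a` and not a power of `b`, then
`g * a ^ m * g * b ^ n ≠ 1` for all integers `m`, `n`. -/
theorem statement16 {α : Type*} (a b : α) (hab : a ≠ b) (g : FreeGroup α)
    (hga : ∀ k : ℤ, g ≠ FreeGroup.of a ^ k) (hgb : ∀ k : ℤ, g ≠ FreeGroup.of b ^ k) :
    ∀ m n : ℤ, g * FreeGroup.of a ^ m * g * FreeGroup.of b ^ n ≠ 1 := by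
  classical
  intro m n h
  set x := g * FreeGroup.of a ^ m with hx
  have hx2 : x * x = FreeGroup.of b ^ (-n) * FreeGroup.of a ^ m := by
    have e1 : x * x = g * FreeGroup.of a ^ m * g * FreeGroup.of b ^ n *
        ((FreeGroup.of b ^ n)⁻¹ * FreeGroup.of a ^ m) := by
      rw [hx]; group
    rw [e1, h, one_mul, ← zpow_neg]
  obtain ⟨sb, hsb⟩ := St16.zpow_eq_mk b (-n)
  obtain ⟨sa, hsa⟩ := St16.zpow_eq_mk a m
  rw [hsb, hsa, FreeGroup.mul_mk] at hx2
  rcases Nat.eq_zero_or_pos (-n).natAbs with hn0 | hn1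
  · rw [hn0, List.replicate_zero, List.nil_append] at hx2
    obtain ⟨j, hj⟩ := St16.sq_eq_pow hx2
    apply hga (j - m)
    have e2 : g = x * (FreeGroup.of a ^ m)⁻¹ := by rw [hx]; group
    rw [e2, hj, ← zpow_sub]
  · rcases Nat.eq_zero_or_pos m.natAbs with hm0 | hm1
    · have hm : m = 0 := Int.natAbs_eq_zero.mp hm0
      rw [hm0, List.replicate_zero, List.append_nil] at hx2
      obtain ⟨j, hj⟩ := St16.sq_eq_pow hx2
      apply hgb j
      have e2 : g = x := by rw [hx, hm]; simp
      rw [e2, hj]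
    · exact St16.not_sq_two_blocks hab.symm (by omega) (by omega) x hx2
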